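/- Let U ∈ M₄(ℂ) with U G U† = G and det U = 1 (i.e., U ∈ SU(2,2)). Then the following are equivalent: (i) either U·X(x)·(conj U)⁻¹ = X(x) for all x ∈ ℝ⁶, or U·X(x)·(conj U)⁻¹ = −X(x) for all x ∈ ℝ⁶; (ii) U ∈ {I₄, −I₄, iI₄, −iI₄}. In other words, the kernel of the induced action of SU(2,2) on the projective quadric (compactified Minkowski space) is the cyclic group {1, −1, i, −i}. -/

import Mathlib

open Matrix Complex

/-- The six antilinear-Clifford matrices Γ₁,…,Γ₆ (indexed 0,…,5). -/
noncomputable def Gam : Fin 6 → Matrix (Fin 4) (Fin 4) ℂ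
  | 0 => !![0, 0, I, 0; 0, 0, 0, -I; I, 0, 0, 0; 0, -I, 0, 0]
  | 1 => !![0, 0, 1, 0; 0, 0, 0, 1; 1, 0, 0, 0; 0, 1, 0, 0]
  | 2 => !![0, 0, 0, -I; 0, 0, -I, 0; 0, -I, 0, 0; -I, 0, 0, 0]
  | 3 => !![0, I, 0, 0; -I, 0, 0, 0; 0, 0, 0, I; 0, 0, -I, 0]
  | 4 => !![0, 0, 0, -1; 0, 0, 1, 0; 0, 1, 0, 0; -1, 0, 0, 0]
  | 5 => !![0, 1, 0, 0; -1, 0, 0, 0; 0, 0, 0, -1; 0, 0, 1, 0]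

/-- X(x) = Σ x^α Γ_α. -/
noncomputable def Xm (x : Fin 6 → ℝ) : Matrix (Fin 4) (Fin 4) ℂ :=
  ∑ α : Fin 6, (x α : ℂ) • Gam α

/-- The quadratic form of signature (4,2). -/
def Qform (x : Fin 6 → ℝ) : ℝ :=
  x 0 ^ 2 + x 1 ^ 2 + x 2 ^ 2 - x 3 ^ 2 + x 4 ^ 2 - x 5 ^ 2

/-- The bilinear form of signature (4,2). -/
def Qbil (x y : Fin 6 → ℝ) : ℝ :=
  x 0 * y 0 + x 1 * y 1 + x 2 * y 2 - x 3 * y 3 + x 4 * y 4 - x 5 * y 5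

/-- G = diag(1,1,-1,-1) as a function. -/
def Gv : Fin 4 → ℝ := ![1, 1, -1, -1]

/-- The pseudo-Hermitian form of signature (2,2) on ℂ⁴. -/
def herm (u v : Fin 4 → ℂ) : ℂ :=
  u 0 * starRingEnd ℂ (v 0) + u 1 * starRingEnd ℂ (v 1)
    - u 2 * starRingEnd ℂ (v 2) - u 3 * starRingEnd ℂ (v 3)

/-- The Levi-Civita symbol on four indices, ε^{0123} = 1. -/
noncomputable def eps (i j k l : Fin 4) : ℝ :=
  (((j : ℕ) : ℝ) - ((i : ℕ) : ℝ)) * (((k : ℕ) : ℝ) - ((i : ℕ) : ℝ)) *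
    (((l : ℕ) : ℝ) - ((i : ℕ) : ℝ)) * (((k : ℕ) : ℝ) - ((j : ℕ) : ℝ)) *
    (((l : ℕ) : ℝ) - ((j : ℕ) : ℝ)) * (((l : ℕ) : ℝ) - ((k : ℕ) : ℝ)) / 12

/-- The six antisymmetric matrices Σ₁,…,Σ₆ (indexed 0,…,5). -/
noncomputable def Sig : Fin 6 → Matrix (Fin 4) (Fin 4) ℂ
  | 0 => !![0, 0, -I, 0; 0, 0, 0, I; I, 0, 0, 0; 0, -I, 0, 0]
  | 1 => !![0, 0, -1, 0; 0, 0, 0, -1; 1, 0, 0, 0; 0, 1, 0, 0]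
  | 2 => !![0, 0, 0, I; 0, 0, I, 0; 0, -I, 0, 0; -I, 0, 0, 0]
  | 3 => !![0, I, 0, 0; -I, 0, 0, 0; 0, 0, 0, -I; 0, 0, I, 0]
  | 4 => !![0, 0, 0, 1; 0, 0, -1, 0; 0, 1, 0, 0; -1, 0, 0, 0]
  | 5 => !![0, 1, 0, 0; -1, 0, 0, 0; 0, 0, 0, 1; 0, 0, -1, 0]

/-- Σ(x) = Σ x^α Σ_α. -/
noncomputable def Sm (x : Fin 6 → ℝ) : Matrix (Fin 4) (Fin 4) ℂ :=
  ∑ α : Fin 6, (x α : ℂ) • Sig α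

/-- The antilinear Hodge star on antisymmetric 4×4 complex matrices. -/
noncomputable def hstar (A : Matrix (Fin 4) (Fin 4) ℂ) : Matrix (Fin 4) (Fin 4) ℂ :=
  Matrix.of fun i j =>
    (1 / 2 : ℂ) * ∑ k : Fin 4, ∑ l : Fin 4,
      ((eps i j k l : ℝ) : ℂ) * ((Gv k : ℝ) : ℂ) * ((Gv l : ℝ) : ℂ) * starRingEnd ℂ (A k l)


namespace KernelAux
open Matrix Complex

def Dm : Matrix (Fin 4) (Fin 4) ℂ := !![1,0,0,0; 0,-1,0,0; 0,0,1,0; 0,0,0,-1]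
def Pm : Matrix (Fin 4) (Fin 4) ℂ := !![0,1,0,0; 1,0,0,0; 0,0,0,1; 0,0,1,0]
def Qm : Matrix (Fin 4) (Fin 4) ℂ := !![0,0,0,-1; 0,0,1,0; 0,-1,0,0; 1,0,0,0]
def Rm : Matrix (Fin 4) (Fin 4) ℂ := !![0,-1,0,0; 1,0,0,0; 0,0,0,1; 0,0,-1,0]

lemma prod0 : Gam 0 * Gam 1 = Complex.I • Dm := by
  ext i j
  fin_cases i <;> fin_cases j <;>
    simp [Gam, Dm, Matrix.mul_apply, Fin.sum_univ_four, Matrix.vecHead, Matrix.vecTail]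

lemma prod2 : Gam 2 * Gam 1 = (-Complex.I) • Pm := by
  ext i j
  fin_cases i <;> fin_cases j <;>
    simp [Gam, Pm, Matrix.mul_apply, Fin.sum_univ_four, Matrix.vecHead, Matrix.vecTail]

lemma prod3 : Gam 3 * Gam 1 = (-Complex.I) • Qm := by
  ext i j
  fin_cases i <;> fin_cases j <;>
    simp [Gam, Qm, Matrix.mul_apply, Fin.sum_univ_four, Matrix.vecHead, Matrix.vecTail]

lemma prod4 : Gam 4 * Gam 1 = Rm := by
  ext i j
  fin_cases i <;> fin_cases j <;>
    simp [Gam, Rm, Matrix.mul_apply, Fin.sum_univ_four, Matrix.vecHead, Matrix.vecTail]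

lemma g11 : Gam 1 * Gam 1 = 1 := by
  ext i j
  fin_cases i <;> fin_cases j <;>
    simp [Gam, Matrix.mul_apply, Fin.sum_univ_four, Matrix.one_apply,
      Matrix.vecHead, Matrix.vecTail]

lemma Xm_single (α : Fin 6) :
    Xm (fun β => if β = α then (1:ℝ) else 0) = Gam α := by
  unfold Xm
  rw [Finset.sum_eq_single α]
  · simp
  · intro b _ hb
    simp [hb]
  · simp

lemma scalar_of_comm (U : Matrix (Fin 4) (Fin 4) ℂ)
    (hD : U * Dm = Dm * U) (hP : U * Pm = Pm * U)
    (hQ : U * Qm = Qm * U) (hR : U * Rm = Rm * U) :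
    U = U 0 0 • 1 := by
  have e : ∀ (A B : Matrix (Fin 4) (Fin 4) ℂ), A = B → ∀ i j : Fin 4, A i j = B i j :=
    fun A B h i j => by rw [h]
  have d01 := e _ _ hD 0 1
  have d03 := e _ _ hD 0 3
  have d10 := e _ _ hD 1 0
  have d12 := e _ _ hD 1 2
  have d21 := e _ _ hD 2 1
  have d23 := e _ _ hD 2 3
  have d30 := e _ _ hD 3 0
  have d32 := e _ _ hD 3 2
  have p01 := e _ _ hP 0 1
  have p23 := e _ _ hP 2 3
  have p03 := e _ _ hP 0 3
  have p21 := e _ _ hP 2 1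
  have q03 := e _ _ hQ 0 3
  have r03 := e _ _ hR 0 3
  have r21 := e _ _ hR 2 1
  simp [Dm, Pm, Qm, Rm, Matrix.mul_apply, Fin.sum_univ_four, Matrix.vecHead, Matrix.vecTail] at d01 d03 d10 d12 d21 d23 d30 d32 p01 p23 p03 p21 q03 r03 r21
  have z01 : U 0 1 = 0 := by linear_combination -d01/2
  have z03 : U 0 3 = 0 := by linear_combination -d03/2
  have z10 : U 1 0 = 0 := by linear_combination d10/2
  have z12 : U 1 2 = 0 := by linear_combination d12/2
  have z21 : U 2 1 = 0 := by linear_combination -d21/2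
  have z23 : U 2 3 = 0 := by linear_combination -d23/2
  have z30 : U 3 0 = 0 := by linear_combination d30/2
  have z32 : U 3 2 = 0 := by linear_combination d32/2
  have z02 : U 0 2 = 0 := by linear_combination (p03 + r03)/2
  have z13 : U 1 3 = 0 := by linear_combination (r03 - p03)/2
  have z20 : U 2 0 = 0 := by linear_combination (p21 - r21)/2
  have z31 : U 3 1 = 0 := by linear_combination -(p21 + r21)/2
  have e11 : U 1 1 = U 0 0 := p01.symm
  have e33 : U 3 3 = U 0 0 := q03.symm
  have e22 : U 2 2 = U 0 0 := by linear_combination p23 - q03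
  ext i j
  fin_cases i <;> fin_cases j <;>
    simp [z01, z02, z03, z10, z12, z13, z20, z21, z23, z30, z31, z32, e11, e22, e33,
      Matrix.smul_apply, Matrix.one_apply]

lemma forward (U : Matrix (Fin 4) (Fin 4) ℂ) (s : ℂ)
    (h : ∀ α : Fin 6, U * Gam α = Gam α * (s • U.map (starRingEnd ℂ))) :
    U = U 0 0 • 1 := by
  have hsV : s • U.map (starRingEnd ℂ) = Gam 1 * U * Gam 1 := by
    have h1 := h 1
    calc s • U.map (starRingEnd ℂ)
        = (Gam 1 * Gam 1) * (s • U.map (starRingEnd ℂ)) := by rw [g11, Matrix.one_mul]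
      _ = Gam 1 * (Gam 1 * (s • U.map (starRingEnd ℂ))) := by rw [Matrix.mul_assoc]
      _ = Gam 1 * (U * Gam 1) := by rw [← h1]
      _ = Gam 1 * U * Gam 1 := by rw [Matrix.mul_assoc]
  have hc : ∀ α : Fin 6, U * (Gam α * Gam 1) = (Gam α * Gam 1) * U := by
    intro α
    have hα := h α
    rw [hsV] at hα
    calc U * (Gam α * Gam 1) = (U * Gam α) * Gam 1 := by rw [Matrix.mul_assoc]
      _ = (Gam α * (Gam 1 * U * Gam 1)) * Gam 1 := by rw [hα]
      _ = (Gam α * Gam 1) * U * (Gam 1 * Gam 1) := by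
          simp only [Matrix.mul_assoc]
      _ = (Gam α * Gam 1) * U := by rw [g11, Matrix.mul_one]
  have hIne : (Complex.I : ℂ) ≠ 0 := Complex.I_ne_zero
  have hnIne : (-Complex.I : ℂ) ≠ 0 := neg_ne_zero.2 Complex.I_ne_zero
  have hD : U * Dm = Dm * U := by
    have h0 := hc 0
    rw [prod0, Matrix.mul_smul, Matrix.smul_mul] at h0
    exact smul_right_injective _ hIne h0
  have hP : U * Pm = Pm * U := by
    have h2 := hc 2
    rw [prod2, Matrix.mul_smul, Matrix.smul_mul] at h2
    exact smul_right_injective _ hnIne h2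
  have hQ : U * Qm = Qm * U := by
    have h3 := hc 3
    rw [prod3, Matrix.mul_smul, Matrix.smul_mul] at h3
    exact smul_right_injective _ hnIne h3
  have hR : U * Rm = Rm * U := by
    have h4 := hc 4
    rw [prod4] at h4
    exact h4
  exact scalar_of_comm U hD hP hQ hR

lemma map_smul_one (c : ℂ) :
    ((c • (1 : Matrix (Fin 4) (Fin 4) ℂ)).map (starRingEnd ℂ)) = (starRingEnd ℂ c) • 1 := by
  ext i j
  simp [Matrix.map_apply, Matrix.smul_apply, Matrix.one_apply, apply_ite (starRingEnd ℂ)]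

lemma inv_smul_one (c d : ℂ) (h : c * d = 1) :
    (c • (1 : Matrix (Fin 4) (Fin 4) ℂ))⁻¹ = d • 1 :=
  Matrix.inv_eq_right_inv (by
    rw [Matrix.smul_mul, Matrix.mul_smul, smul_smul, Matrix.one_mul, h, one_smul])

lemma act (c : ℂ) (hinv : starRingEnd ℂ c * c = 1) (X : Matrix (Fin 4) (Fin 4) ℂ) :
    (c • (1 : Matrix (Fin 4) (Fin 4) ℂ)) * X *
      ((c • (1 : Matrix (Fin 4) (Fin 4) ℂ)).map (starRingEnd ℂ))⁻¹ = (c * c) • X := by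
  rw [map_smul_one, inv_smul_one _ _ hinv, Matrix.smul_mul, Matrix.one_mul,
    Matrix.mul_smul, Matrix.mul_one, smul_smul]

end KernelAux

/-- The kernel of the induced action of SU(2,2) on the compactified Minkowski space
(projective quadric) is {1, -1, i, -i}: for U ∈ SU(2,2), U·X(x)·(conj U)⁻¹ = ±X(x) for all x
iff U is one of ±I₄, ±iI₄. -/
theorem kernel_of_action (U : Matrix (Fin 4) (Fin 4) ℂ)
    (hU : U * Matrix.diagonal (fun i => ((Gv i : ℝ) : ℂ)) * Uᴴ =
      Matrix.diagonal (fun i => ((Gv i : ℝ) : ℂ)))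
    (hdet : U.det = 1) :
    ((∀ x : Fin 6 → ℝ, U * Xm x * (U.map (starRingEnd ℂ))⁻¹ = Xm x) ∨
        (∀ x : Fin 6 → ℝ, U * Xm x * (U.map (starRingEnd ℂ))⁻¹ = -Xm x)) ↔
      (U = 1 ∨ U = -1 ∨ U = Complex.I • (1 : Matrix (Fin 4) (Fin 4) ℂ) ∨
        U = -(Complex.I • (1 : Matrix (Fin 4) (Fin 4) ℂ))) := by
  classical
  constructor
  · intro hyp
    have hVdet : (U.map (starRingEnd ℂ)).det = 1 := by
      rw [show U.map ⇑(starRingEnd ℂ) = (RingHom.mapMatrix (starRingEnd ℂ)) U from rfl,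
        ← RingHom.map_det, hdet, _root_.map_one]
    have hVu : IsUnit (U.map (starRingEnd ℂ)).det := by rw [hVdet]; exact isUnit_one
    have key : ∃ s : ℂ, ∀ α : Fin 6,
        U * Gam α = Gam α * (s • U.map (starRingEnd ℂ)) := by
      rcases hyp with h | h
      · refine ⟨1, fun α => ?_⟩
        have hx := h (fun β => if β = α then 1 else 0)
        rw [KernelAux.Xm_single] at hx
        have h2 := congrArg (· * U.map (starRingEnd ℂ)) hx
        rw [Matrix.mul_assoc (U * Gam α), Matrix.nonsing_inv_mul _ hVu,
          Matrix.mul_one] at h2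
        rw [h2, one_smul]
      · refine ⟨-1, fun α => ?_⟩
        have hx := h (fun β => if β = α then 1 else 0)
        rw [KernelAux.Xm_single] at hx
        have h2 := congrArg (· * U.map (starRingEnd ℂ)) hx
        rw [Matrix.mul_assoc (U * Gam α), Matrix.nonsing_inv_mul _ hVu,
          Matrix.mul_one] at h2
        rw [h2, Matrix.neg_mul, Matrix.mul_smul, neg_smul, one_smul]
    obtain ⟨s, hs⟩ := key
    have hU' := KernelAux.forward U s hs
    set a := U 0 0 with ha
    have h4 : a ^ 4 = 1 := by
      rw [hU'] at hdet
      rw [Matrix.det_smul, Matrix.det_one, mul_one] at hdet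
      simpa using hdet
    have hfac : (a - 1) * (a + 1) * (a - Complex.I) * (a + Complex.I) = 0 := by
      linear_combination h4 + (1 - a ^ 2) * Complex.I_mul_I
    rcases mul_eq_zero.1 hfac with h' | h'
    · rcases mul_eq_zero.1 h' with h'' | h''
      · rcases mul_eq_zero.1 h'' with h3 | h3
        · left
          rw [hU', sub_eq_zero.1 h3, one_smul]
        · right; left
          rw [hU', eq_neg_of_add_eq_zero_left h3, neg_smul, one_smul]
      · right; right; left
        rw [hU', sub_eq_zero.1 h'']
    · right; right; right
      rw [hU', eq_neg_of_add_eq_zero_left h', neg_smul]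
  · intro h
    have e1 : (1 : Matrix (Fin 4) (Fin 4) ℂ) = (1:ℂ) • 1 := (one_smul _ _).symm
    have em1 : (-1 : Matrix (Fin 4) (Fin 4) ℂ) = (-1:ℂ) • 1 := by
      rw [neg_smul, one_smul]
    have emI : -(Complex.I • (1 : Matrix (Fin 4) (Fin 4) ℂ)) = (-Complex.I) • 1 :=
      (neg_smul _ _).symm
    rcases h with h | h | h | h
    · left; intro x
      rw [h, e1, KernelAux.act 1 (by simp)]
      simp
    · left; intro x
      rw [h, em1, KernelAux.act (-1) (by simp)]
      norm_num
    · right; intro x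
      rw [h, KernelAux.act Complex.I (by simp [Complex.conj_I, Complex.I_mul_I])]
      rw [Complex.I_mul_I, neg_smul, one_smul]
    · right; intro x
      rw [h, emI, KernelAux.act (-Complex.I) (by simp [Complex.conj_I, Complex.I_mul_I])]
      rw [neg_mul_neg, Complex.I_mul_I, neg_smul, one_smul]
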